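/- Assume the index set Γ is infinite and that for every ξ ∈ Γ the graph {(x, h_ξ(x)) : x ∈ D_ξ} is dense in 2^ω × 2^ω. Then for every finite binary sequence η the set S_η = {(n, π, h) ∈ Q_h̄ : dom(h) ∩ [η] ≠ ∅} is dense in the poset (Q_h̄, ≤), and the set S^η = {(n, π, h) ∈ Q_h̄ : ran(h) ∩ [η] ≠ ∅} is dense in (Q_h̄, ≤) (a subset S of a poset P is dense if every p ∈ P has an extension q ≤ p with q ∈ S). -/
import Mathlib


/-- Restriction of `x ∈ 2^ω` to its first `n` coordinates. -/
def res (n : ℕ) (x : ℕ → Bool) : Fin n → Bool := fun i => x i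

/-- The basic clopen cylinder `[η] = {x ∈ 2^ω : x↾n = η}` determined by `η ∈ 2^n`. -/
def cyl {n : ℕ} (η : Fin n → Bool) : Set (ℕ → Bool) := {x | res n x = η}

/-- A condition `p = (n, π, h)` of the forcing poset `Q_h̄`, where the family
`h̄ = ⟨h_ξ : ξ ∈ Γ⟩` is given by the domains `Dom ξ ⊆ 2^ω` and (total extensions of)
the functions `hbar ξ`.  The finite partial function `h` is represented by its
graph, a finite set of pairs. -/
structure QCond {Γ : Type*} (Dom : Γ → Set (ℕ → Bool))
    (hbar : Γ → (ℕ → Bool) → (ℕ → Bool)) where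
  /-- the natural number `n` -/
  n : ℕ
  /-- the permutation `π` of `2^n` -/
  perm : Equiv.Perm (Fin n → Bool)
  /-- the graph of the finite partial function `h` -/
  graph : Set ((ℕ → Bool) × (ℕ → Bool))
  /-- `h` is a finite partial function -/
  graph_finite : graph.Finite
  /-- `h` is a function (single-valued) -/
  graph_fun : ∀ z ∈ graph, ∀ w ∈ graph, z.1 = w.1 → z = w
  /-- the domain of `h` is contained in `∪_ξ D_ξ` -/
  dom_sub : ∀ z ∈ graph, ∃ ξ, z.1 ∈ Dom ξ
  /-- `|dom h ∩ D_ξ| ≤ 1` for every `ξ` -/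
  dom_once : ∀ ξ, ∀ z ∈ graph, ∀ w ∈ graph, z.1 ∈ Dom ξ → w.1 ∈ Dom ξ → z = w
  /-- if `x ∈ dom h ∩ D_ξ` then `h x = h_ξ x` -/
  val_eq : ∀ z ∈ graph, ∀ ξ, z.1 ∈ Dom ξ → z.2 = hbar ξ z.1
  /-- if `x ∈ dom h` then `(h x)↾n = π (x↾n)` -/
  proj : ∀ z ∈ graph, res n z.2 = perm (res n z.1)

/-- The order on `Q_h̄`: `q ≤ p` iff `p.n ≤ q.n`, the partial function of `q`
extends that of `p`, and the permutation of `q` projects onto that of `p`. -/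
def QLe {Γ : Type*} {Dom : Γ → Set (ℕ → Bool)} {hbar : Γ → (ℕ → Bool) → (ℕ → Bool)}
    (q p : QCond Dom hbar) : Prop :=
  ∃ hn : p.n ≤ q.n, p.graph ⊆ q.graph ∧
    ∀ η : Fin q.n → Bool,
      (fun i : Fin p.n => q.perm η (Fin.castLE hn i)) =
        p.perm (fun i : Fin p.n => η (Fin.castLE hn i))

/-- `p̂ = ∪_{η ∈ 2^n} [η] × [π η] ⊆ 2^ω × 2^ω`. -/
def Qhat {Γ : Type*} {Dom : Γ → Set (ℕ → Bool)} {hbar : Γ → (ℕ → Bool) → (ℕ → Bool)}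
    (p : QCond Dom hbar) : Set ((ℕ → Bool) × (ℕ → Bool)) :=
  ⋃ η : Fin p.n → Bool, cyl η ×ˢ cyl (p.perm η)

lemma res_continuous (n : ℕ) : Continuous (res n) :=
  continuous_pi fun i : Fin n => continuous_apply (i : ℕ)

lemma cyl_open {n : ℕ} (σ : Fin n → Bool) : IsOpen (cyl σ) := by
  have h : cyl σ = res n ⁻¹' {σ} := rfl
  rw [h]
  exact (res_continuous n).isOpen_preimage _ (isOpen_discrete _)

lemma cyl_nonempty {n : ℕ} (σ : Fin n → Bool) : (cyl σ).Nonempty := by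
  refine ⟨fun i => if h : i < n then σ ⟨i, h⟩ else false, ?_⟩
  show res n _ = σ
  funext i
  simp [res, i.isLt]

section Aux
variable {Γ : Type*} {Dom : Γ → Set (ℕ → Bool)} {hbar : Γ → (ℕ → Bool) → (ℕ → Bool)}

lemma fresh_index [Infinite Γ]
    (hdisjD : Pairwise fun ξ η => Disjoint (Dom ξ) (Dom η))
    (p : QCond Dom hbar) : ∃ ξ, ∀ z ∈ p.graph, z.1 ∉ Dom ξ := by
  have hfin : {ξ | ∃ z ∈ p.graph, z.1 ∈ Dom ξ}.Finite := by
    have h : {ξ | ∃ z ∈ p.graph, z.1 ∈ Dom ξ} = ⋃ z ∈ p.graph, {ξ | z.1 ∈ Dom ξ} := by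
      ext ζ; simp
    rw [h]
    refine p.graph_finite.biUnion fun z _ => Set.Subsingleton.finite ?_
    intro ζ hζ ζ' hζ'
    by_contra hne
    exact Set.disjoint_left.mp (hdisjD hne) hζ hζ'
  obtain ⟨ξ, hξ⟩ := hfin.infinite_compl.nonempty
  exact ⟨ξ, fun z hz hmem => hξ ⟨z, hz, hmem⟩⟩

lemma find_point
    (hdense : ∀ ξ, Dense {z : (ℕ → Bool) × (ℕ → Bool) | z.1 ∈ Dom ξ ∧ z.2 = hbar ξ z.1})
    (ξ : Γ) {a b : ℕ} (σ : Fin a → Bool) (τ : Fin b → Bool) :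
    ∃ x ∈ Dom ξ, res a x = σ ∧ res b (hbar ξ x) = τ := by
  obtain ⟨⟨x, y⟩, hU, hxD, hy⟩ := (hdense ξ).inter_open_nonempty _
    ((cyl_open σ).prod (cyl_open τ)) ((cyl_nonempty σ).prod (cyl_nonempty τ))
  obtain ⟨hσ, hτ⟩ := hU
  rw [show y = hbar ξ x from hy] at hτ
  exact ⟨x, hxD, hσ, hτ⟩

lemma extend_cond (hdisjD : Pairwise fun ξ η => Disjoint (Dom ξ) (Dom η))
    (p : QCond Dom hbar) {ξ : Γ} {x : ℕ → Bool} (hx : x ∈ Dom ξ)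
    (hfresh : ∀ z ∈ p.graph, z.1 ∉ Dom ξ)
    (hpr : res p.n (hbar ξ x) = p.perm (res p.n x)) :
    ∃ q : QCond Dom hbar, QLe q p ∧ (x, hbar ξ x) ∈ q.graph := by
  have huniq : ∀ ζ, x ∈ Dom ζ → ζ = ξ := by
    intro ζ hζ
    by_contra hne
    exact Set.disjoint_left.mp (hdisjD hne) hζ hx
  refine ⟨⟨p.n, p.perm, insert (x, hbar ξ x) p.graph, p.graph_finite.insert _,
    ?_, ?_, ?_, ?_, ?_⟩, ⟨le_refl _, Set.subset_insert _ _, fun τ => ?_⟩,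
    Set.mem_insert _ _⟩
  · rintro z (rfl | hz) w (rfl | hw) hzw
    · rfl
    · exact absurd (hzw ▸ hx) (hfresh w hw)
    · exact absurd (hzw ▸ hx) (hfresh z hz)
    · exact p.graph_fun z hz w hw hzw
  · rintro z (rfl | hz)
    · exact ⟨ξ, hx⟩
    · exact p.dom_sub z hz
  · rintro ζ z (rfl | hz) w (rfl | hw) hzd hwd
    · rfl
    · exact absurd ((huniq ζ hzd) ▸ hwd) (hfresh w hw)
    · exact absurd ((huniq ζ hwd) ▸ hzd) (hfresh z hz)
    · exact p.dom_once ζ z hz w hw hzd hwd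
  · rintro z (rfl | hz) ζ hzd
    · rw [huniq ζ hzd]
    · exact p.val_eq z hz ζ hzd
  · rintro z (rfl | hz)
    · exact hpr
    · exact p.proj z hz
  · rfl

end Aux

theorem stmt_14 {Γ : Type*} [Infinite Γ]
    (Dom : Γ → Set (ℕ → Bool)) (hbar : Γ → (ℕ → Bool) → (ℕ → Bool))
    (hcount : ∀ ξ, (Dom ξ).Countable)
    (hdisjD : Pairwise fun ξ η => Disjoint (Dom ξ) (Dom η))
    (hdisjR : Pairwise fun ξ η => Disjoint (hbar ξ '' Dom ξ) (hbar η '' Dom η))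
    -- the graph of each `h_ξ` is dense in `2^ω × 2^ω`
    (hdense : ∀ ξ, Dense {z : (ℕ → Bool) × (ℕ → Bool) | z.1 ∈ Dom ξ ∧ z.2 = hbar ξ z.1})
    {k : ℕ} (η : Fin k → Bool) :
    -- `S_η = {(n, π, h) : dom h ∩ [η] ≠ ∅}` is dense in the poset `(Q_h̄, ≤)`
    (∀ p : QCond Dom hbar, ∃ q : QCond Dom hbar, QLe q p ∧ ∃ z ∈ q.graph, z.1 ∈ cyl η) ∧
    -- `S^η = {(n, π, h) : ran h ∩ [η] ≠ ∅}` is dense in the poset `(Q_h̄, ≤)`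
    (∀ p : QCond Dom hbar, ∃ q : QCond Dom hbar, QLe q p ∧ ∃ z ∈ q.graph, z.2 ∈ cyl η) := by
  constructor
  · intro p
    obtain ⟨ξ, hfresh⟩ := fresh_index hdisjD p
    set m := max p.n k with hm
    set σ : Fin m → Bool := fun i => if h : (i : ℕ) < k then η ⟨i, h⟩ else false with hσdef
    obtain ⟨x, hxD, hσ, hτ⟩ := find_point hdense ξ σ
      (p.perm fun i : Fin p.n => σ (Fin.castLE (le_max_left p.n k) i))
    have h1 : res p.n x = fun i : Fin p.n => σ (Fin.castLE (le_max_left p.n k) i) := by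
      funext i
      exact congrFun hσ (Fin.castLE (le_max_left p.n k) i)
    have hpr : res p.n (hbar ξ x) = p.perm (res p.n x) := by rw [hτ, h1]
    obtain ⟨q, hle, hmem⟩ := extend_cond hdisjD p hxD hfresh hpr
    refine ⟨q, hle, (x, hbar ξ x), hmem, ?_⟩
    show res k x = η
    funext i
    have hi : (i : ℕ) < m := lt_of_lt_of_le i.isLt (le_max_right p.n k)
    have h2 := congrFun hσ ⟨i, hi⟩
    simpa [res, hσdef, i.isLt] using h2
  · intro p
    obtain ⟨ξ, hfresh⟩ := fresh_index hdisjD p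
    set m := max p.n k with hm
    set τ : Fin m → Bool := fun i => if h : (i : ℕ) < k then η ⟨i, h⟩ else false with hτdef
    obtain ⟨x, hxD, hσ, hτ⟩ := find_point hdense ξ
      (p.perm.symm fun i : Fin p.n => τ (Fin.castLE (le_max_left p.n k) i)) τ
    have h1 : res p.n (hbar ξ x) = fun i : Fin p.n => τ (Fin.castLE (le_max_left p.n k) i) := by
      funext i
      exact congrFun hτ (Fin.castLE (le_max_left p.n k) i)
    have hpr : res p.n (hbar ξ x) = p.perm (res p.n x) := by
      rw [h1, hσ, Equiv.apply_symm_apply]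
    obtain ⟨q, hle, hmem⟩ := extend_cond hdisjD p hxD hfresh hpr
    refine ⟨q, hle, (x, hbar ξ x), hmem, ?_⟩
    show res k (hbar ξ x) = η
    funext i
    have hi : (i : ℕ) < m := lt_of_lt_of_le i.isLt (le_max_right p.n k)
    have h2 := congrFun hτ ⟨i, hi⟩
    simpa [res, hτdef, i.isLt] using h2
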